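/- Let n ≥ 1 and let A, B : V → End(V) be two linear maps, each with Ω(A(X)Y,Z) (resp. Ω(B(X)Y,Z)) totally symmetric and A(X)∘A(Y) = 0, B(X)∘B(Y) = 0 for all X,Y (so ∇^A = ∇⁰ + A and ∇^B = ∇⁰ + B are two flat translation-invariant symplectic connections of Ricci type on (ℝ^{2n},Ω)). Define ψ := ψ^B ∘ ψ^{−A}, where ψ^C(x) = x − ½·C(x)x. Then ψ is a smooth bijection of V, its derivative is symplectic at every point (Ω(Dψ(x)X, Dψ(x)Y) = Ω(X,Y) for all x,X,Y), and ψ carries ∇^A to ∇^B: for all x,X,Y, D²ψ(x)(X,Y) + B(Dψ(x)X)(Dψ(x)Y) = Dψ(x)(A(X)Y). In particular, any two flat translation-invariant symplectic connections of Ricci type on (ℝ^{2n},Ω) are conjugate under a symplectomorphism. -/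

import Mathlib

noncomputable section

/-- The standard symplectic form on `ℝ^{2n}`. -/
def Omega (n : ℕ) (x y : Fin (2*n) → ℝ) : ℝ :=
  ∑ i : Fin n, (x ⟨i.1, by have := i.isLt; omega⟩ * y ⟨n + i.1, by have := i.isLt; omega⟩
    - x ⟨n + i.1, by have := i.isLt; omega⟩ * y ⟨i.1, by have := i.isLt; omega⟩)

/-- The map `ψ^C(x) = x − ½·C(x)x` associated to a linear `C : V → End(V)`. -/
def psiMap (n : ℕ)
    (C : (Fin (2*n) → ℝ) →ₗ[ℝ] (Fin (2*n) → ℝ) →ₗ[ℝ] (Fin (2*n) → ℝ))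
    (x : Fin (2*n) → ℝ) : Fin (2*n) → ℝ :=
  x - (1/2 : ℝ) • C x x

namespace ConjAux

variable {n : ℕ}

lemma Omega_sub_left (a b c : Fin (2*n) → ℝ) :
    Omega n (a - b) c = Omega n a c - Omega n b c := by
  simp only [Omega, Pi.sub_apply, ← Finset.sum_sub_distrib]
  exact Finset.sum_congr rfl fun i _ => by ring

lemma Omega_sub_right (a b c : Fin (2*n) → ℝ) :
    Omega n a (b - c) = Omega n a b - Omega n a c := by
  simp only [Omega, Pi.sub_apply, ← Finset.sum_sub_distrib]
  exact Finset.sum_congr rfl fun i _ => by ring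

lemma Omega_neg_left (a c : Fin (2*n) → ℝ) :
    Omega n (-a) c = - Omega n a c := by
  simp only [Omega, Pi.neg_apply, ← Finset.sum_neg_distrib]
  exact Finset.sum_congr rfl fun i _ => by ring

lemma Omega_zero_left (c : Fin (2*n) → ℝ) : Omega n 0 c = 0 := by
  simp [Omega]

lemma Omega_antisym (a b : Fin (2*n) → ℝ) : Omega n a b = - Omega n b a := by
  simp only [Omega, ← Finset.sum_neg_distrib]
  exact Finset.sum_congr rfl fun i _ => by ring

lemma Omega_single_high (v : Fin (2*n) → ℝ) (j : Fin n) :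
    Omega n v (Pi.single ⟨n + j.1, by have := j.isLt; omega⟩ 1)
      = v ⟨j.1, by have := j.isLt; omega⟩ := by
  have hj := j.isLt
  rw [Omega, Finset.sum_eq_single j]
  · have h1 : ¬ ((j : ℕ) = n + j.1) := by omega
    simp [Pi.single_apply, Fin.mk.injEq, h1]
    intro h; omega
  · intro i _ hij
    have hi := i.isLt
    have h1 : ¬ (n + (i : ℕ) = n + j.1) := by
      intro h; exact hij (Fin.ext (by omega))
    have h2 : ¬ ((i : ℕ) = n + j.1) := by omega
    simp [Pi.single_apply, Fin.mk.injEq, h1, h2]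
    intro h; exact absurd (Fin.ext h) hij
  · simp

lemma Omega_single_low (v : Fin (2*n) → ℝ) (j : Fin n) :
    Omega n v (Pi.single ⟨j.1, by have := j.isLt; omega⟩ 1)
      = - v ⟨n + j.1, by have := j.isLt; omega⟩ := by
  have hj := j.isLt
  rw [Omega, Finset.sum_eq_single j]
  · have h1 : ¬ (n + (j : ℕ) = j.1) := by omega
    simp [Pi.single_apply, Fin.mk.injEq, h1]
    intro h; omega
  · intro i _ hij
    have hi := i.isLt
    have h1 : ¬ ((i : ℕ) = j.1) := by
      intro h; exact hij (Fin.ext (by omega))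
    have h2 : ¬ (n + (i : ℕ) = j.1) := by omega
    simp [Pi.single_apply, Fin.mk.injEq, h1, h2]
  · simp

lemma Omega_nondeg (v : Fin (2*n) → ℝ) (h : ∀ z, Omega n v z = 0) : v = 0 := by
  funext k
  rcases lt_or_ge (k : ℕ) n with hk | hk
  · have := h (Pi.single ⟨n + (⟨k.1, hk⟩ : Fin n).1, by omega⟩ 1)
    rw [Omega_single_high v ⟨k.1, hk⟩] at this
    simpa using this
  · have hk2 := k.isLt
    have hkn : (k : ℕ) - n < n := by omega
    have := h (Pi.single ⟨(⟨k.1 - n, hkn⟩ : Fin n).1, by omega⟩ 1)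
    rw [Omega_single_low v ⟨k.1 - n, hkn⟩] at this
    have hke : (⟨n + (k.1 - n), by omega⟩ : Fin (2*n)) = k := Fin.ext (by simp; omega)
    rw [hke] at this
    simpa using (neg_eq_zero.mp (by linarith [this] : -v k = 0))

/-- The continuous bilinear version of `C`. -/
def toCLM (C : (Fin (2*n) → ℝ) →ₗ[ℝ] (Fin (2*n) → ℝ) →ₗ[ℝ] (Fin (2*n) → ℝ)) :
    (Fin (2*n) → ℝ) →L[ℝ] (Fin (2*n) → ℝ) →L[ℝ] (Fin (2*n) → ℝ) :=
  LinearMap.toContinuousLinearMap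
    { toFun := fun x => LinearMap.toContinuousLinearMap (C x),
      map_add' := by intro x y; ext z; simp
      map_smul' := by intro c x; ext z; simp }

@[simp] lemma toCLM_apply (C : (Fin (2*n) → ℝ) →ₗ[ℝ] (Fin (2*n) → ℝ) →ₗ[ℝ] (Fin (2*n) → ℝ))
    (x y : Fin (2*n) → ℝ) : toCLM C x y = C x y := rfl

lemma hasFDerivAt_psiMap (C : (Fin (2*n) → ℝ) →ₗ[ℝ] (Fin (2*n) → ℝ) →ₗ[ℝ] (Fin (2*n) → ℝ))
    (hs : ∀ X Y, C X Y = C Y X) (x : Fin (2*n) → ℝ) :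
    HasFDerivAt (psiMap n C)
      (ContinuousLinearMap.id ℝ (Fin (2*n) → ℝ) - toCLM C x) x := by
  have hb := (toCLM C).isBoundedBilinearMap
  have hdiag : HasFDerivAt (fun y : (Fin (2*n) → ℝ) => (y, y))
      ((ContinuousLinearMap.id ℝ (Fin (2*n) → ℝ)).prod
        (ContinuousLinearMap.id ℝ (Fin (2*n) → ℝ))) x :=
    (hasFDerivAt_id x).prodMk (hasFDerivAt_id x)
  have h1 : HasFDerivAt (fun y => toCLM C y y)
      ((hb.deriv (x, x)).comp
        ((ContinuousLinearMap.id ℝ (Fin (2*n) → ℝ)).prod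
          (ContinuousLinearMap.id ℝ (Fin (2*n) → ℝ)))) x :=
    HasFDerivAt.comp (f := fun y : (Fin (2*n) → ℝ) => (y, y)) x (hb.hasFDerivAt (x, x)) hdiag
  have h2 : HasFDerivAt (psiMap n C)
      (ContinuousLinearMap.id ℝ (Fin (2*n) → ℝ)
        - (1/2 : ℝ) • ((hb.deriv (x, x)).comp
          ((ContinuousLinearMap.id ℝ (Fin (2*n) → ℝ)).prod
            (ContinuousLinearMap.id ℝ (Fin (2*n) → ℝ))))) x :=
    (hasFDerivAt_id x).sub (h1.const_smul (1/2 : ℝ))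
  convert h2 using 1
  refine ContinuousLinearMap.ext fun Y => ?_
  simp only [ContinuousLinearMap.sub_apply, ContinuousLinearMap.id_apply,
    ContinuousLinearMap.smul_apply, ContinuousLinearMap.comp_apply,
    ContinuousLinearMap.prod_apply, IsBoundedBilinearMap.deriv_apply, toCLM_apply, hs Y x]
  module

lemma contDiff_psiMap (C : (Fin (2*n) → ℝ) →ₗ[ℝ] (Fin (2*n) → ℝ) →ₗ[ℝ] (Fin (2*n) → ℝ)) :
    ContDiff ℝ (⊤ : ℕ∞) (psiMap n C) := by
  have h : psiMap n C = fun x => x - (1/2 : ℝ) • toCLM C x x := rfl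
  rw [h]
  exact contDiff_id.sub
    (((toCLM C).isBoundedBilinearMap.contDiff.comp (contDiff_id.prodMk contDiff_id)).const_smul _)

lemma psiMap_inv (C : (Fin (2*n) → ℝ) →ₗ[ℝ] (Fin (2*n) → ℝ) →ₗ[ℝ] (Fin (2*n) → ℝ))
    (hs : ∀ X Y, C X Y = C Y X) (hnil : ∀ X Y Z, C X (C Y Z) = 0) (x : Fin (2*n) → ℝ) :
    psiMap n (-C) (psiMap n C x) = x := by
  have h1 : C (C x x) x = 0 := by rw [hs]; exact hnil x x x
  simp only [psiMap, LinearMap.neg_apply, map_sub, map_smul, LinearMap.sub_apply,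
    LinearMap.smul_apply, hnil, h1, smul_zero, sub_zero, zero_sub, neg_neg]
  module

lemma omega_pres (C : (Fin (2*n) → ℝ) →ₗ[ℝ] (Fin (2*n) → ℝ) →ₗ[ℝ] (Fin (2*n) → ℝ))
    (h2 : ∀ z u v, Omega n (C z u) v = Omega n (C z v) u)
    (hnil2 : ∀ z v, C z (C z v) = 0) (z u v : Fin (2*n) → ℝ) :
    Omega n (u - C z u) (v - C z v) = Omega n u v := by
  have e1 : Omega n (C z u) (C z v) = 0 := by
    rw [h2 z u (C z v), hnil2 z v, Omega_zero_left]
  have e2 : Omega n u (C z v) = - Omega n (C z u) v := by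
    rw [Omega_antisym, h2]
  rw [Omega_sub_left, Omega_sub_right, Omega_sub_right, e1, e2]
  ring

end ConjAux

open ConjAux in
/-- Any two flat translation-invariant symplectic connections of Ricci
type `∇^A`, `∇^B` on `(ℝ^{2n},Ω)` are conjugate under the symplectomorphism
`ψ = ψ^B ∘ ψ^{−A}`: `ψ` is a smooth bijection with symplectic derivative carrying
`∇^A` to `∇^B`, i.e. `D²ψ(x)(X,Y) + B(Dψ(x)X)(Dψ(x)Y) = Dψ(x)(A(X)Y)`. -/
theorem flat_invariant_connections_conjugate (n : ℕ) (hn : 1 ≤ n)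
    (A B : (Fin (2*n) → ℝ) →ₗ[ℝ] (Fin (2*n) → ℝ) →ₗ[ℝ] (Fin (2*n) → ℝ))
    (hsymA₁ : ∀ X Y Z, Omega n (A X Y) Z = Omega n (A Y X) Z)
    (hsymA₂ : ∀ X Y Z, Omega n (A X Y) Z = Omega n (A X Z) Y)
    (hnilA : ∀ X Y Z, A X (A Y Z) = 0)
    (hsymB₁ : ∀ X Y Z, Omega n (B X Y) Z = Omega n (B Y X) Z)
    (hsymB₂ : ∀ X Y Z, Omega n (B X Y) Z = Omega n (B X Z) Y)
    (hnilB : ∀ X Y Z, B X (B Y Z) = 0) :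
    Function.Bijective (psiMap n B ∘ psiMap n (-A)) ∧
    ContDiff ℝ (⊤ : ℕ∞) (psiMap n B ∘ psiMap n (-A)) ∧
    (∀ x X Y,
      Omega n (fderiv ℝ (psiMap n B ∘ psiMap n (-A)) x X)
        (fderiv ℝ (psiMap n B ∘ psiMap n (-A)) x Y) = Omega n X Y) ∧
    (∀ x X Y,
      iteratedFDeriv ℝ 2 (psiMap n B ∘ psiMap n (-A)) x ![X, Y]
        + B (fderiv ℝ (psiMap n B ∘ psiMap n (-A)) x X)
            (fderiv ℝ (psiMap n B ∘ psiMap n (-A)) x Y)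
      = fderiv ℝ (psiMap n B ∘ psiMap n (-A)) x (A X Y)) := by
  -- symmetry of A and B as maps
  have hsA : ∀ X Y, A X Y = A Y X := by
    intro X Y
    have h : ∀ Z, Omega n (A X Y - A Y X) Z = 0 := by
      intro Z; rw [Omega_sub_left, hsymA₁]; ring
    exact sub_eq_zero.mp (Omega_nondeg _ h)
  have hsB : ∀ X Y, B X Y = B Y X := by
    intro X Y
    have h : ∀ Z, Omega n (B X Y - B Y X) Z = 0 := by
      intro Z; rw [Omega_sub_left, hsymB₁]; ring
    exact sub_eq_zero.mp (Omega_nondeg _ h)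
  have hsA' : ∀ X Y, (-A) X Y = (-A) Y X := by
    intro X Y; simp only [LinearMap.neg_apply, hsA X Y]
  have hnilA' : ∀ X Y Z, (-A) X ((-A) Y Z) = 0 := by
    intro X Y Z; simp [LinearMap.neg_apply, map_neg, hnilA]
  have hsB' : ∀ X Y, (-B) X Y = (-B) Y X := by
    intro X Y; simp only [LinearMap.neg_apply, hsB X Y]
  have hnilB' : ∀ X Y Z, (-B) X ((-B) Y Z) = 0 := by
    intro X Y Z; simp [LinearMap.neg_apply, map_neg, hnilB]
  have hnilB'' : ∀ u v w, B (B u v) w = 0 := fun u v w => by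
    rw [hsB]; exact hnilB w u v
  -- inverses
  have hinv1 : ∀ y, psiMap n (-B) (psiMap n B y) = y := psiMap_inv B hsB hnilB
  have hinv2 : ∀ x, psiMap n A (psiMap n (-A) x) = x := by
    intro x; have := psiMap_inv (-A) hsA' hnilA' x; rwa [neg_neg A] at this
  have hinv3 : ∀ x, psiMap n (-A) (psiMap n A x) = x := psiMap_inv A hsA hnilA
  have hinv4 : ∀ y, psiMap n B (psiMap n (-B) y) = y := by
    intro y; have := psiMap_inv (-B) hsB' hnilB' y; rwa [neg_neg B] at this
  -- first derivative
  have hDψ : ∀ y, HasFDerivAt (psiMap n B ∘ psiMap n (-A))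
      ((ContinuousLinearMap.id ℝ (Fin (2*n) → ℝ) - toCLM B (psiMap n (-A) y)).comp
        (ContinuousLinearMap.id ℝ (Fin (2*n) → ℝ) - toCLM (-A) y)) y := fun y =>
    HasFDerivAt.comp y (hasFDerivAt_psiMap B hsB (psiMap n (-A) y))
      (hasFDerivAt_psiMap (-A) hsA' y)
  have hfd : fderiv ℝ (psiMap n B ∘ psiMap n (-A)) = fun y =>
      (ContinuousLinearMap.id ℝ (Fin (2*n) → ℝ) - toCLM B (psiMap n (-A) y)).comp
        (ContinuousLinearMap.id ℝ (Fin (2*n) → ℝ) - toCLM (-A) y) :=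
    funext fun y => (hDψ y).fderiv
  have h2A' : ∀ z u v, Omega n ((-A) z u) v = Omega n ((-A) z v) u := by
    intro z u v
    simp only [LinearMap.neg_apply, Omega_neg_left, hsymA₂ z u v]
  have hnil2A' : ∀ z v, (-A) z ((-A) z v) = 0 := fun z v => hnilA' z z v
  refine ⟨?_, ?_, ?_, ?_⟩
  · exact Function.bijective_iff_has_inverse.mpr
      ⟨psiMap n A ∘ psiMap n (-B),
        fun x => by simp only [Function.comp_apply, hinv1, hinv2],
        fun x => by simp only [Function.comp_apply, hinv3, hinv4]⟩
  · exact (contDiff_psiMap B).comp (contDiff_psiMap (-A))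
  · intro x X Y
    rw [hfd]
    simp only [ContinuousLinearMap.comp_apply, ContinuousLinearMap.sub_apply,
      ContinuousLinearMap.id_apply, toCLM_apply]
    rw [omega_pres B hsymB₂ (fun z v => hnilB z z v),
      omega_pres (-A) h2A' hnil2A']
  · intro x X Y
    rw [iteratedFDeriv_two_apply, hfd]
    have hc : HasFDerivAt
        (fun y => ContinuousLinearMap.id ℝ (Fin (2*n) → ℝ) - toCLM B (psiMap n (-A) y))
        ((0 - toCLM B).comp
          (ContinuousLinearMap.id ℝ (Fin (2*n) → ℝ) - toCLM (-A) x)) x :=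
      HasFDerivAt.comp (f := psiMap n (-A)) x
        ((hasFDerivAt_const _ _).sub (toCLM B).hasFDerivAt)
        (hasFDerivAt_psiMap (-A) hsA' x)
    have hd : HasFDerivAt
        (fun y => ContinuousLinearMap.id ℝ (Fin (2*n) → ℝ) - toCLM (-A) y)
        (0 - toCLM (-A)) x :=
      (hasFDerivAt_const _ _).sub (toCLM (-A)).hasFDerivAt
    have hΦ := hc.clm_comp hd
    rw [hΦ.fderiv]
    simp only [Matrix.cons_val_zero, Matrix.cons_val_one, Matrix.head_cons,
      ContinuousLinearMap.add_apply, ContinuousLinearMap.comp_apply,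
      ContinuousLinearMap.sub_apply, ContinuousLinearMap.zero_apply,
      ContinuousLinearMap.id_apply, ContinuousLinearMap.flip_apply,
      ContinuousLinearMap.compL_apply, toCLM_apply, LinearMap.neg_apply,
      zero_sub, ContinuousLinearMap.neg_apply, map_neg, map_sub, map_add,
      LinearMap.sub_apply, LinearMap.add_apply, sub_neg_eq_add, neg_neg]
    simp only [hnilA, hnilB, hnilB'', add_zero, zero_add, sub_zero, map_zero,
      neg_zero, zero_sub, sub_neg_eq_add]
    module
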